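/- Normal prior implies uniform metric bound: Let Q be a probability distribution on a finite set X and let χ = -log₂(min{Q(x) : Q(x) > 0}). For any function m : X → ℝ define p_m(x) = Q{x' : m(x') ≥ m(x)}. Then E_{X∼Q}[1/p_m(X)] ≤ 1 + ln(2)·χ, uniformly over all functions m. -/

import Mathlib

open Finset

lemma aux_layer_cake {X : Type*} [DecidableEq X] (Q m : X → ℝ) (c : ℝ) (hc : 0 < c) :
    ∀ s : Finset X, (∀ x ∈ s, c ≤ Q x) → s.Nonempty →
    ∑ x ∈ s, Q x * (1 / ∑ x' ∈ s.filter (fun x' => m x ≤ m x'), Q x')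
      ≤ 1 + Real.log (∑ x ∈ s, Q x) - Real.log c := by
  intro s
  induction s using Finset.strongInduction with
  | _ s ih =>
    intro hcs hs
    obtain ⟨x₀, hx₀s, hx₀⟩ := s.exists_min_image m hs
    have hQpos : ∀ x ∈ s, 0 < Q x := fun x hx => lt_of_lt_of_le hc (hcs x hx)
    have hTpos : 0 < ∑ x ∈ s, Q x :=
      Finset.sum_pos hQpos hs
    -- the filter at x₀ is all of s
    have hfilt₀ : s.filter (fun x' => m x₀ ≤ m x') = s := by
      apply Finset.filter_true_of_mem
      intro x hx; exact hx₀ x hx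
    set s' := s.erase x₀ with hs'
    have hsplit : ∑ x ∈ s, Q x * (1 / ∑ x' ∈ s.filter (fun x' => m x ≤ m x'), Q x')
        = Q x₀ * (1 / ∑ x ∈ s, Q x)
          + ∑ x ∈ s', Q x * (1 / ∑ x' ∈ s.filter (fun x' => m x ≤ m x'), Q x') := by
      rw [← Finset.add_sum_erase _ _ hx₀s, hfilt₀]
    rcases s'.eq_empty_or_nonempty with h' | h'
    · -- s = {x₀}
      have hseq : s = {x₀} := by
        rw [← Finset.insert_erase hx₀s, ← hs', h']
        rfl
      rw [hsplit, h', Finset.sum_empty, add_zero, hseq, Finset.sum_singleton,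
        mul_one_div, div_self (ne_of_gt (hQpos x₀ hx₀s))]
      have : Real.log c ≤ Real.log (Q x₀) :=
        Real.log_le_log hc (hcs x₀ hx₀s)
      linarith
    · have hsub : s' ⊂ s := Finset.erase_ssubset hx₀s
      have hT'pos : 0 < ∑ x ∈ s', Q x :=
        Finset.sum_pos (fun x hx => hQpos x (Finset.mem_of_mem_erase hx)) h'
      -- compare the inner denominators on s'
      have hterm : ∀ x ∈ s', Q x * (1 / ∑ x' ∈ s.filter (fun x' => m x ≤ m x'), Q x')
          ≤ Q x * (1 / ∑ x' ∈ s'.filter (fun x' => m x ≤ m x'), Q x') := by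
        intro x hx
        have hxs : x ∈ s := Finset.mem_of_mem_erase hx
        have hmem : x ∈ s'.filter (fun x' => m x ≤ m x') := by
          simp [Finset.mem_filter, hx]
        have hpos' : 0 < ∑ x' ∈ s'.filter (fun x' => m x ≤ m x'), Q x' :=
          Finset.sum_pos (fun y hy => hQpos y (Finset.mem_of_mem_erase (Finset.mem_filter.mp hy).1))
            ⟨x, hmem⟩
        have hle : ∑ x' ∈ s'.filter (fun x' => m x ≤ m x'), Q x'
            ≤ ∑ x' ∈ s.filter (fun x' => m x ≤ m x'), Q x' := by
          apply Finset.sum_le_sum_of_subset_of_nonneg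
          · exact Finset.filter_subset_filter _ hsub.subset
          · intro y hy _
            exact le_of_lt (hQpos y (Finset.mem_filter.mp hy).1)
        have := one_div_le_one_div_of_le hpos' hle
        exact mul_le_mul_of_nonneg_left this (le_of_lt (hQpos x hxs))
      have hIH := ih s' hsub (fun x hx => hcs x (Finset.mem_of_mem_erase hx)) h'
      have hsum' : ∑ x ∈ s', Q x * (1 / ∑ x' ∈ s.filter (fun x' => m x ≤ m x'), Q x')
          ≤ 1 + Real.log (∑ x ∈ s', Q x) - Real.log c :=
        le_trans (Finset.sum_le_sum hterm) hIH
      -- key inequality: Q x₀ / T + log T' ≤ log T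
      have hTeq : ∑ x ∈ s, Q x = Q x₀ + ∑ x ∈ s', Q x := by
        rw [← Finset.add_sum_erase _ _ hx₀s]
      have hkey : Q x₀ * (1 / ∑ x ∈ s, Q x) + Real.log (∑ x ∈ s', Q x)
          ≤ Real.log (∑ x ∈ s, Q x) := by
        set T := ∑ x ∈ s, Q x
        set T' := ∑ x ∈ s', Q x
        have hratio : Real.log (T' / T) ≤ T' / T - 1 :=
          Real.log_le_sub_one_of_pos (div_pos hT'pos hTpos)
        have hlogdiv : Real.log (T' / T) = Real.log T' - Real.log T :=
          Real.log_div (ne_of_gt hT'pos) (ne_of_gt hTpos)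
        have h1 : Q x₀ * (1 / T) = 1 - T' / T := by
          field_simp
          linarith [hTeq]
        rw [hlogdiv] at hratio
        rw [h1]
        linarith
      rw [hsplit]
      linarith

/-- Normal prior implies a uniform metric bound: for any metric `m`,
`E_Q[1/p_m(X)] ≤ 1 + ln(2)·χ` where `p_m(x) = Q{x' : m(x') ≥ m(x)}` and
`χ = -log₂(min of Q on its support)`. -/
theorem normal_prior_uniform_metric_bound
    {X : Type*} [Fintype X] [Nonempty X]
    (Q : X → ℝ) (hQ0 : ∀ x, 0 ≤ Q x) (hQ1 : ∑ x, Q x = 1)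
    (hs : (univ.filter fun x => Q x ≠ 0).Nonempty)
    (χ : ℝ) (hχ : χ = -Real.logb 2 ((univ.filter fun x => Q x ≠ 0).inf' hs Q)) :
    ∀ m : X → ℝ,
      ∑ x, Q x * (1 / ∑ x' ∈ univ.filter (fun x' => m x ≤ m x'), Q x')
        ≤ 1 + Real.log 2 * χ := by
  classical
  intro m
  set s : Finset X := univ.filter (fun x => Q x ≠ 0) with hsdef
  set c : ℝ := s.inf' hs Q with hcdef
  have hc : 0 < c := by
    obtain ⟨b, hb, hbe⟩ := Finset.exists_mem_eq_inf' hs Q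
    rw [hcdef, hbe]
    have : Q b ≠ 0 := (Finset.mem_filter.mp hb).2
    exact lt_of_le_of_ne (hQ0 b) (Ne.symm this)
  have hcle : ∀ x ∈ s, c ≤ Q x := fun x hx => Finset.inf'_le Q hx
  have hinner : ∀ x : X, ∑ x' ∈ univ.filter (fun x' => m x ≤ m x'), Q x'
      = ∑ x' ∈ s.filter (fun x' => m x ≤ m x'), Q x' := by
    intro x
    rw [hsdef, Finset.filter_comm]
    exact (Finset.sum_filter_of_ne (fun y _ hy => hy)).symm
  have houter : ∑ x, Q x * (1 / ∑ x' ∈ univ.filter (fun x' => m x ≤ m x'), Q x')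
      = ∑ x ∈ s, Q x * (1 / ∑ x' ∈ s.filter (fun x' => m x ≤ m x'), Q x') := by
    simp_rw [hinner]
    refine (Finset.sum_filter_of_ne ?_).symm
    intro x _ h hx0
    exact h (by rw [hx0, zero_mul])
  have hsum1 : ∑ x ∈ s, Q x = 1 := by
    rw [hsdef, Finset.sum_filter_ne_zero, hQ1]
  have hlog2 : Real.log 2 ≠ 0 := ne_of_gt (Real.log_pos (by norm_num))
  have hχ' : Real.log 2 * χ = -Real.log c := by
    rw [hχ, Real.logb]
    field_simp
  rw [houter, hχ']
  have := aux_layer_cake Q m c hc s hcle hs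
  rw [hsum1, Real.log_one] at this
  linarith
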